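/- Let e = a(a ∩ aa) − (aa − a)a over the vocabulary {a}, and let I be any structure over {a} with (x, y) ∈ e(I) for some pair (x, y). Then there exist elements u₁, u₂ such that all five edges x → u₁, u₁ → u₂, u₂ → y, u₁ → y, and x → u₂ belong to a^I. Consequently, either at least two of x, u₁, u₂, y coincide (so the directed graph (adom I, a^I) contains a cycle), or x, u₁, u₂, y are four distinct vertices inducing a subgraph isomorphic to the graph W on {1,2,3,4} with edges {(1,2),(2,3),(3,4),(1,3),(2,4)}. -/
import Mathlib


/-- Syntax of the Downward Algebra (DA): expressions built from relation names
in a vocabulary `Γ` using union, intersection, difference, and composition. -/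
inductive DA (Γ : Type) : Type where
  | var : Γ → DA Γ
  | union : DA Γ → DA Γ → DA Γ
  | inter : DA Γ → DA Γ → DA Γ
  | diff : DA Γ → DA Γ → DA Γ
  | comp : DA Γ → DA Γ → DA Γ

namespace DA

/-- Semantics: the binary relation `e(I)` defined by expression `e` in a structure `I`
(a structure over `Γ` with domain `D` assigns a binary relation on `D` to each name). -/
def eval {Γ D : Type} (I : Γ → D → D → Prop) : DA Γ → D → D → Prop
  | .var a => I a
  | .union e f => fun x y => eval I e x y ∨ eval I f x y
  | .inter e f => fun x y => eval I e x y ∧ eval I f x y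
  | .diff e f => fun x y => eval I e x y ∧ ¬ eval I f x y
  | .comp e f => fun x y => ∃ z, eval I e x z ∧ eval I f z y

/-- The difference degree of an expression. -/
def deg {Γ : Type} : DA Γ → ℕ
  | .var _ => 0
  | .union e f => max (deg e) (deg f)
  | .inter e f => max (deg e) (deg f)
  | .diff e f => max (deg e) (deg f) + 1
  | .comp e f => max (deg e) (deg f)

/-- A structure is finite when each relation is a finite binary relation. -/
def FiniteStruct {Γ D : Type} (I : Γ → D → D → Prop) : Prop :=
  ∀ a, {p : D × D | I a p.1 p.2}.Finite

/-- An expression is finitely satisfiable if some finite structure makes it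
evaluate to a nonempty relation. -/
def FinSat {Γ : Type} (e : DA Γ) : Prop :=
  ∃ (D : Type) (I : Γ → D → D → Prop), FiniteStruct I ∧ ∃ x y, eval I e x y

end DA

/-- The expression a(a ∩ aa) − (aa − a)a over the single relation name a. -/
def e14 : DA Unit :=
  .diff (.comp (.var ()) (.inter (.var ()) (.comp (.var ()) (.var ()))))
        (.comp (.diff (.comp (.var ()) (.var ())) (.var ())) (.var ()))

/-- The edge relation of the canonical non-series-parallel graph W, on Fin 4
(vertices 0,1,2,3 standing for 1,2,3,4): edges (1,2),(2,3),(3,4),(1,3),(2,4). -/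
def WRel : Fin 4 → Fin 4 → Prop := fun p q =>
  (p = 0 ∧ q = 1) ∨ (p = 1 ∧ q = 2) ∨ (p = 2 ∧ q = 3) ∨ (p = 0 ∧ q = 2) ∨ (p = 1 ∧ q = 3)

/-- If (x,y) ∈ (a(a ∩ aa) − (aa − a)a)(I) in any structure I over {a}, then there
are u₁, u₂ with the five a-edges x→u₁, u₁→u₂, u₂→y, u₁→y, x→u₂; consequently either
the graph of a^I contains a cycle, or x, u₁, u₂, y are four distinct vertices
carrying a subgraph isomorphic to W. -/
theorem stmt14 (D : Type) (aI : D → D → Prop) (x y : D)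
    (h : DA.eval (fun _ : Unit => aI) e14 x y) :
    ∃ u₁ u₂ : D, aI x u₁ ∧ aI u₁ u₂ ∧ aI u₂ y ∧ aI u₁ y ∧ aI x u₂ ∧
      ((∃ v : D, Relation.TransGen aI v v) ∨
        (Function.Injective ![x, u₁, u₂, y] ∧
          ∀ p q : Fin 4, WRel p q → aI (![x, u₁, u₂, y] p) (![x, u₁, u₂, y] q))) := by
  simp only [e14, DA.eval] at h
  obtain ⟨⟨u₁, hxu₁, hu₁y, u₂, hu₁u₂, hu₂y⟩, h2⟩ := h
  have hxu₂ : aI x u₂ := by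
    by_contra hn
    exact h2 ⟨u₂, ⟨⟨u₁, hxu₁, hu₁u₂⟩, hn⟩, hu₂y⟩
  refine ⟨u₁, u₂, hxu₁, hu₁u₂, hu₂y, hu₁y, hxu₂, ?_⟩
  by_cases h1 : x = u₁
  · subst h1; exact Or.inl ⟨x, .single hxu₁⟩
  by_cases h2' : x = u₂
  · subst h2'; exact Or.inl ⟨x, .single hxu₂⟩
  by_cases h3 : x = y
  · subst h3; exact Or.inl ⟨x, .tail (.single hxu₂) hu₂y⟩
  by_cases h4 : u₁ = u₂
  · subst h4; exact Or.inl ⟨u₁, .single hu₁u₂⟩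
  by_cases h5 : u₁ = y
  · subst h5; exact Or.inl ⟨u₁, .single hu₁y⟩
  by_cases h6 : u₂ = y
  · subst h6; exact Or.inl ⟨u₂, .single hu₂y⟩
  refine Or.inr ⟨?_, ?_⟩
  · intro i j hij
    fin_cases i <;> fin_cases j <;> simp_all
  · intro p q hpq
    rcases hpq with ⟨hp, hq⟩ | ⟨hp, hq⟩ | ⟨hp, hq⟩ | ⟨hp, hq⟩ | ⟨hp, hq⟩ <;>
      subst hp <;> subst hq <;> simp <;> assumption
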